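/- Let V, H ∈ ℝ^{r×r} satisfy VHᵀ = I. Then the matrix M = (Vᵀ ⊙ Vᵀ + Hᵀ ⊙ Hᵀ)/2, whose (j,i) entry is (v_{ij}² + h_{ij}²)/2, is a superstochastic matrix: it can be written as D + N where D is doubly stochastic and N has nonnegative entries. -/

import Mathlib

open Matrix BigOperators

def DoublyStochastic {r : ℕ} (M : Matrix (Fin r) (Fin r) ℝ) : Prop :=
  (∀ i j, 0 ≤ M i j) ∧ (∀ i, ∑ j, M i j = 1) ∧ (∀ j, ∑ i, M i j = 1)

def SuperStochastic {r : ℕ} (M : Matrix (Fin r) (Fin r) ℝ) : Prop :=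
  ∃ D N : Matrix (Fin r) (Fin r) ℝ,
    DoublyStochastic D ∧ (∀ i j, 0 ≤ N i j) ∧ M = D + N

open InnerProductSpace in
private lemma hall_of_inverse {r : ℕ} (V H : Matrix (Fin r) (Fin r) ℝ) (h : V * Hᵀ = 1)
    (A B : Finset (Fin r)) :
    (A.card : ℝ) + B.card - r ≤ ∑ j ∈ A, ∑ i ∈ B, (V i j ^ 2 + H i j ^ 2) / 2 := by
  classical
  have hinv : ∀ i i', ∑ j, V i j * H i' j = if i = i' then (1 : ℝ) else 0 := by
    intro i i'
    have h1 := congrFun (congrFun h i) i'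
    simpa [Matrix.mul_apply, Matrix.transpose_apply, Matrix.one_apply] using h1
  -- the linear map whose kernel consists of vectors supported on B with V-image vanishing off A
  let φ : EuclideanSpace ℝ (Fin r) →ₗ[ℝ] ((↥(Aᶜ) → ℝ) × (↥(Bᶜ) → ℝ)) :=
    { toFun := fun u => (fun j => ∑ i, u i * V i (j : Fin r), fun i => u (i : Fin r))
      map_add' := by
        intro u v
        refine Prod.ext (funext fun j => ?_) (funext fun i => ?_) <;>
          simp [add_mul, Finset.sum_add_distrib]
      map_smul' := by
        intro c u
        refine Prod.ext (funext fun j => ?_) (funext fun i => ?_) <;>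
          simp [Finset.mul_sum, mul_assoc] }
  set K := LinearMap.ker φ with hK
  -- dimension bound
  have hdim : (A.card : ℝ) + B.card - r ≤ (Module.finrank ℝ ↥K : ℝ) := by
    have h1 := LinearMap.finrank_range_add_finrank_ker φ
    have h2 : Module.finrank ℝ (EuclideanSpace ℝ (Fin r)) = r := by
      simp [finrank_euclideanSpace]
    have h3 : Module.finrank ℝ ((↥(Aᶜ : Finset (Fin r)) → ℝ) × (↥(Bᶜ : Finset (Fin r)) → ℝ))
        = (r - A.card) + (r - B.card) := by
      rw [Module.finrank_prod]
      simp [Module.finrank_pi, Finset.card_compl]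
    have h4 : Module.finrank ℝ ↥(LinearMap.range φ) ≤ (r - A.card) + (r - B.card) := by
      rw [← h3]
      exact Submodule.finrank_le _
    have hA : A.card ≤ r := by simpa using Finset.card_le_univ A
    have hB : B.card ≤ r := by simpa using Finset.card_le_univ B
    rw [h2, ← hK] at h1
    have h6 : A.card + B.card ≤ Module.finrank ℝ ↥K + r := by omega
    have h7 : ((A.card + B.card : ℕ) : ℝ) ≤ ((Module.finrank ℝ ↥K + r : ℕ) : ℝ) :=
      Nat.cast_le.mpr h6
    push_cast at h7
    linarith
  -- orthonormal basis of the kernel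
  let b := stdOrthonormalBasis ℝ ↥K
  let v : Fin (Module.finrank ℝ ↥K) → EuclideanSpace ℝ (Fin r) := fun m => ((b m : ↥K) : EuclideanSpace ℝ (Fin r))
  have hv : Orthonormal ℝ v := K.subtypeₗᵢ.orthonormal_comp_iff.mpr b.orthonormal
  have hvK : ∀ m, φ (v m) = 0 := fun m => LinearMap.mem_ker.mp (by rw [← hK]; exact (b m).2)
  have hu0 : ∀ m, ∀ i ∉ B, v m i = 0 := by
    intro m i hi
    exact congrFun (congrArg Prod.snd (hvK m)) ⟨i, Finset.mem_compl.mpr hi⟩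
  have hu1 : ∀ m, ∀ j ∉ A, ∑ i, v m i * V i j = 0 := by
    intro m j hj
    exact congrFun (congrArg Prod.fst (hvK m)) ⟨j, Finset.mem_compl.mpr hj⟩
  have hnorm : ∀ m, ∑ i, v m i ^ 2 = 1 := by
    intro m
    have h1 : ‖v m‖ = 1 := hv.1 m
    rw [EuclideanSpace.norm_eq] at h1
    have h2 : ∑ i, ‖v m i‖ ^ 2 = 1 := Real.sqrt_eq_one.mp h1
    simpa [Real.norm_eq_abs, sq_abs] using h2
  -- per-vector inequality
  have key : ∀ m, (1 : ℝ) ≤ ∑ j ∈ A,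
      ((∑ i ∈ B, v m i * V i j) ^ 2 + (∑ i ∈ B, v m i * H i j) ^ 2) / 2 := by
    intro m
    set u : EuclideanSpace ℝ (Fin r) := v m with hu
    have hBV : ∀ j, ∑ i ∈ B, u i * V i j = ∑ i, u i * V i j := fun j =>
      Finset.sum_subset B.subset_univ (fun i _ hi => by rw [show u i = (0:ℝ) from hu0 m i hi, zero_mul])
    have hBH : ∀ j, ∑ i ∈ B, u i * H i j = ∑ i, u i * H i j := fun j =>
      Finset.sum_subset B.subset_univ (fun i _ hi => by rw [show u i = (0:ℝ) from hu0 m i hi, zero_mul])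
    have hfull : ∑ j, (∑ i, u i * V i j) * (∑ i, u i * H i j) = 1 := by
      calc ∑ j, (∑ i, u i * V i j) * (∑ i, u i * H i j)
          = ∑ j, ∑ i, ∑ i', (u i * V i j) * (u i' * H i' j) := by
            refine Finset.sum_congr rfl fun j _ => ?_
            rw [Finset.sum_mul_sum]
        _ = ∑ i, ∑ i', u i * u i' * ∑ j, V i j * H i' j := by
            rw [Finset.sum_comm]
            refine Finset.sum_congr rfl fun i _ => ?_
            rw [Finset.sum_comm]
            refine Finset.sum_congr rfl fun i' _ => ?_
            rw [Finset.mul_sum]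
            exact Finset.sum_congr rfl fun j _ => by ring
        _ = ∑ i, u i * u i := by
            refine Finset.sum_congr rfl fun i _ => ?_
            simp only [hinv, mul_ite, mul_one, mul_zero]
            exact Finset.sum_ite_eq Finset.univ i (fun i' => u i * u i') |>.trans (by simp)
        _ = 1 := by
            rw [← hnorm m]
            exact Finset.sum_congr rfl fun i _ => (sq (u i)).symm ▸ by ring
    have hid : ∑ j ∈ A, (∑ i, u i * V i j) * (∑ i, u i * H i j) = 1 := by
      rw [← hfull]
      exact Finset.sum_subset A.subset_univ (fun j _ hj => by rw [hu1 m j hj, zero_mul])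
    rw [← hid]
    refine Finset.sum_le_sum fun j _ => ?_
    rw [← hBV j, ← hBH j]
    nlinarith [sq_nonneg ((∑ i ∈ B, u i * V i j) - (∑ i ∈ B, u i * H i j))]
  -- Bessel inequality per column
  have bessel : ∀ (C : Matrix (Fin r) (Fin r) ℝ) (j : Fin r),
      (∑ m, (∑ i ∈ B, v m i * C i j) ^ 2) ≤ ∑ i ∈ B, C i j ^ 2 := by
    intro C j
    set w : EuclideanSpace ℝ (Fin r) := WithLp.toLp 2 (fun i => if i ∈ B then C i j else 0) with hw
    have hinner : ∀ m, ⟪w, v m⟫_ℝ = ∑ i ∈ B, v m i * C i j := by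
      intro m
      rw [PiLp.inner_apply]
      simp only [RCLike.inner_apply, conj_trivial]
      rw [Finset.sum_congr rfl fun i (_ : i ∈ Finset.univ) => mul_comm (v m i) (w i)]
      have : ∀ i, w i * v m i = if i ∈ B then C i j * v m i else 0 := by
        intro i
        rw [hw]
        by_cases hi : i ∈ B <;> simp [hi]
      rw [Finset.sum_congr rfl fun i (_ : i ∈ Finset.univ) => this i,
        Finset.sum_ite_mem, Finset.univ_inter]
      exact Finset.sum_congr rfl fun i _ => by ring
    have hwn : ‖w‖ ^ 2 = ∑ i ∈ B, C i j ^ 2 := by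
      rw [EuclideanSpace.norm_eq, Real.sq_sqrt (by positivity)]
      have : ∀ i, ‖w i‖ ^ 2 = if i ∈ B then C i j ^ 2 else 0 := by
        intro i
        rw [hw]
        by_cases hi : i ∈ B <;> simp [hi]
      rw [Finset.sum_congr rfl fun i (_ : i ∈ Finset.univ) => this i,
        Finset.sum_ite_mem, Finset.univ_inter]
    have hb := hv.sum_inner_products_le (𝕜 := ℝ) w (s := Finset.univ)
    calc ∑ m, (∑ i ∈ B, v m i * C i j) ^ 2
        = ∑ m, ‖⟪v m, w⟫_ℝ‖ ^ 2 := by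
          refine Finset.sum_congr rfl fun m _ => ?_
          rw [real_inner_comm, hinner m, Real.norm_eq_abs, sq_abs]
      _ ≤ ‖w‖ ^ 2 := hb
      _ = ∑ i ∈ B, C i j ^ 2 := hwn
  -- assemble
  have main : ((Module.finrank ℝ ↥K : ℕ) : ℝ)
      ≤ ∑ j ∈ A, ∑ i ∈ B, (V i j ^ 2 + H i j ^ 2) / 2 := by
    calc ((Module.finrank ℝ ↥K : ℕ) : ℝ)
        = ∑ _m : Fin (Module.finrank ℝ ↥K), (1 : ℝ) := by simp
      _ ≤ ∑ m, ∑ j ∈ A,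
            ((∑ i ∈ B, v m i * V i j) ^ 2 + (∑ i ∈ B, v m i * H i j) ^ 2) / 2 :=
          Finset.sum_le_sum fun m _ => key m
      _ = ∑ j ∈ A, ((∑ m, (∑ i ∈ B, v m i * V i j) ^ 2)
            + (∑ m, (∑ i ∈ B, v m i * H i j) ^ 2)) / 2 := by
          rw [Finset.sum_comm]
          refine Finset.sum_congr rfl fun j _ => ?_
          rw [← Finset.sum_add_distrib, ← Finset.sum_div]
      _ ≤ ∑ j ∈ A, ((∑ i ∈ B, V i j ^ 2) + (∑ i ∈ B, H i j ^ 2)) / 2 := by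
          refine Finset.sum_le_sum fun j _ => ?_
          have := add_le_add (bessel V j) (bessel H j)
          linarith
      _ = ∑ j ∈ A, ∑ i ∈ B, (V i j ^ 2 + H i j ^ 2) / 2 := by
          refine Finset.sum_congr rfl fun j _ => ?_
          rw [← Finset.sum_add_distrib, ← Finset.sum_div]
  linarith

variable {r : ℕ}

private def hallSum (M : Matrix (Fin r) (Fin r) ℝ) (A B : Finset (Fin r)) : ℝ :=
  ∑ p ∈ A, ∑ q ∈ B, M p q

private def Hall (M : Matrix (Fin r) (Fin r) ℝ) : Prop :=
  ∀ A B : Finset (Fin r), (A.card : ℝ) + B.card - r ≤ hallSum M A B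

private def Tight (M : Matrix (Fin r) (Fin r) ℝ) (A B : Finset (Fin r)) : Prop :=
  hallSum M A B = (A.card : ℝ) + B.card - r

private lemma hallSum_eq (M : Matrix (Fin r) (Fin r) ℝ) (A B : Finset (Fin r)) :
    hallSum M A B = ∑ p : Fin r, ∑ q : Fin r, (if p ∈ A ∧ q ∈ B then M p q else 0) := by
  classical
  have inner : ∀ p, (∑ q : Fin r, if p ∈ A ∧ q ∈ B then M p q else 0)
      = if p ∈ A then ∑ q ∈ B, M p q else 0 := by
    intro p
    by_cases hp : p ∈ A
    · simp only [hp, true_and, if_true]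
      rw [Finset.sum_ite_mem, Finset.univ_inter]
    · simp [hp]
  unfold hallSum
  rw [Finset.sum_congr rfl fun p (_ : p ∈ Finset.univ) => inner p,
    Finset.sum_ite_mem, Finset.univ_inter]

private lemma hallSum_mono {M₁ M₂ : Matrix (Fin r) (Fin r) ℝ}
    (h : ∀ a b, M₁ a b ≤ M₂ a b) (A B : Finset (Fin r)) :
    hallSum M₁ A B ≤ hallSum M₂ A B :=
  Finset.sum_le_sum fun p _ => Finset.sum_le_sum fun q _ => h p q

private lemma tight_mono {M₁ M₂ : Matrix (Fin r) (Fin r) ℝ}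
    (h12 : ∀ a b, M₁ a b ≤ M₂ a b) (hH₁ : Hall M₁) {A B : Finset (Fin r)}
    (ht : Tight M₂ A B) : Tight M₁ A B :=
  le_antisymm ((hallSum_mono h12 A B).trans ht.le) (hH₁ A B)

private lemma uncross_le {M : Matrix (Fin r) (Fin r) ℝ} (hM : ∀ a b, 0 ≤ M a b)
    (A A' B B' : Finset (Fin r)) :
    hallSum M (A ∪ A') (B ∩ B') + hallSum M (A ∩ A') (B ∪ B')
      ≤ hallSum M A B + hallSum M A' B' := by
  classical
  simp only [hallSum_eq]
  rw [← Finset.sum_add_distrib, ← Finset.sum_add_distrib]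
  refine Finset.sum_le_sum fun p _ => ?_
  rw [← Finset.sum_add_distrib, ← Finset.sum_add_distrib]
  refine Finset.sum_le_sum fun q _ => ?_
  simp only [Finset.mem_union, Finset.mem_inter]
  by_cases hA : p ∈ A <;> by_cases hA' : p ∈ A' <;> by_cases hB : q ∈ B <;>
    by_cases hB' : q ∈ B' <;> simp [hA, hA', hB, hB'] <;> linarith [hM p q]

private lemma tight_uncross {M : Matrix (Fin r) (Fin r) ℝ} (hM : ∀ a b, 0 ≤ M a b)
    (hH : Hall M) {A A' B B' : Finset (Fin r)}
    (h1 : Tight M A B) (h2 : Tight M A' B') :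
    Tight M (A ∪ A') (B ∩ B') ∧ Tight M (A ∩ A') (B ∪ B') := by
  have hcA : ((A ∪ A').card : ℝ) + (A ∩ A').card = A.card + A'.card := by
    exact_mod_cast Finset.card_union_add_card_inter A A'
  have hcB : ((B ∪ B').card : ℝ) + (B ∩ B').card = B.card + B'.card := by
    exact_mod_cast Finset.card_union_add_card_inter B B'
  have k1 := hH (A ∪ A') (B ∩ B')
  have k2 := hH (A ∩ A') (B ∪ B')
  have k3 := uncross_le hM A A' B B'
  unfold Tight at *
  constructor <;> linarith

private lemma exists_tight_pair_col {M : Matrix (Fin r) (Fin r) ℝ} (hM : ∀ a b, 0 ≤ M a b)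
    (hH : Hall M) (q : Fin r) :
    ∀ S : Finset (Fin r), S.Nonempty →
      (∀ p ∈ S, ∃ A B, p ∈ A ∧ q ∈ B ∧ Tight M A B) →
      ∃ A B, q ∈ B ∧ S ⊆ A ∧ Tight M A B := by
  classical
  intro S
  induction S using Finset.induction_on with
  | empty => intro h; exact absurd h (by simp)
  | @insert a s ha ih =>
    intro _ hpair
    obtain ⟨A₂, B₂, haA₂, hqB₂, ht₂⟩ := hpair a (Finset.mem_insert_self a s)
    rcases s.eq_empty_or_nonempty with rfl | hsne
    · exact ⟨A₂, B₂, hqB₂, by simpa using haA₂, ht₂⟩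
    · obtain ⟨A₁, B₁, hqB₁, hsA₁, ht₁⟩ := ih hsne
        (fun p hp => hpair p (Finset.mem_insert_of_mem hp))
    
      refine ⟨A₁ ∪ A₂, B₁ ∩ B₂, Finset.mem_inter.mpr ⟨hqB₁, hqB₂⟩, ?_,
        (tight_uncross hM hH ht₁ ht₂).1⟩
      exact Finset.insert_subset (Finset.mem_union_right _ haA₂)
        (hsA₁.trans Finset.subset_union_left)

private lemma exists_tight_pair_row {M : Matrix (Fin r) (Fin r) ℝ} (hM : ∀ a b, 0 ≤ M a b)
    (hH : Hall M) (p : Fin r) :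
    ∀ S : Finset (Fin r), S.Nonempty →
      (∀ q ∈ S, ∃ A B, p ∈ A ∧ q ∈ B ∧ Tight M A B) →
      ∃ A B, p ∈ A ∧ S ⊆ B ∧ Tight M A B := by
  classical
  intro S
  induction S using Finset.induction_on with
  | empty => intro h; exact absurd h (by simp)
  | @insert a s ha ih =>
    intro _ hpair
    obtain ⟨A₂, B₂, hpA₂, haB₂, ht₂⟩ := hpair a (Finset.mem_insert_self a s)
    rcases s.eq_empty_or_nonempty with rfl | hsne
    · exact ⟨A₂, B₂, hpA₂, by simpa using haB₂, ht₂⟩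
    · obtain ⟨A₁, B₁, hpA₁, hsB₁, ht₁⟩ := ih hsne
        (fun q hq => hpair q (Finset.mem_insert_of_mem hq))
      refine ⟨A₁ ∩ A₂, B₁ ∪ B₂, Finset.mem_inter.mpr ⟨hpA₁, hpA₂⟩, ?_,
        (tight_uncross hM hH ht₁ ht₂).2⟩
      exact Finset.insert_subset (Finset.mem_union_right _ haB₂)
        (hsB₁.trans Finset.subset_union_left)

private lemma colsum_eq_one {M : Matrix (Fin r) (Fin r) ℝ} (hM : ∀ a b, 0 ≤ M a b)
    (hH : Hall M)
    (ht : ∀ a b, M a b = 0 ∨ ∃ A B, a ∈ A ∧ b ∈ B ∧ Tight M A B) (q : Fin r) :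
    ∑ p, M p q = 1 := by
  classical
  have hge : (1 : ℝ) ≤ ∑ p, M p q := by
    have h1 := hH Finset.univ {q}
    simp only [hallSum, Finset.sum_singleton, Finset.card_univ, Fintype.card_fin,
      Finset.card_singleton, Nat.cast_one] at h1
    linarith
  refine le_antisymm ?_ hge
  set S : Finset (Fin r) := Finset.univ.filter (fun p => M p q ≠ 0) with hS
  have hSne : S.Nonempty := by
    rcases S.eq_empty_or_nonempty with he | hne
    · exfalso
      have hz : ∀ p, M p q = 0 := by
        intro p
        by_contra hc
        have : p ∈ S := by simp [hS, hc]
        simp [he] at this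
      have : ∑ p, M p q = 0 := Finset.sum_eq_zero fun p _ => hz p
      rw [this] at hge; linarith
    · exact hne
  obtain ⟨A, B, hqB, hSA, htAB⟩ := exists_tight_pair_col hM hH q S hSne
    (fun p hp => by
      rcases ht p q with h0 | h1
      · exact absurd h0 (by simpa [hS] using hp)
      · exact h1)
  have hsplit : hallSum M A B = hallSum M A (B.erase q) + ∑ p ∈ A, M p q := by
    unfold hallSum
    rw [← Finset.sum_add_distrib]
    exact Finset.sum_congr rfl fun p _ => (Finset.sum_erase_add B _ hqB).symm
  have hcol : ∑ p ∈ A, M p q = ∑ p, M p q := by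
    refine Finset.sum_subset A.subset_univ fun p _ hp => ?_
    by_contra hne
    exact hp (hSA (by simp [hS, hne]))
  have hH2 := hH A (B.erase q)
  have hcard : (((B.erase q).card : ℝ)) = (B.card : ℝ) - 1 := by
    rw [Finset.card_erase_of_mem hqB,
      Nat.cast_sub (Finset.one_le_card.mpr ⟨q, hqB⟩), Nat.cast_one]
  unfold Tight at htAB
  rw [hsplit, hcol] at htAB
  rw [hcard] at hH2
  linarith

private lemma rowsum_eq_one {M : Matrix (Fin r) (Fin r) ℝ} (hM : ∀ a b, 0 ≤ M a b)
    (hH : Hall M)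
    (ht : ∀ a b, M a b = 0 ∨ ∃ A B, a ∈ A ∧ b ∈ B ∧ Tight M A B) (p : Fin r) :
    ∑ q, M p q = 1 := by
  classical
  have hge : (1 : ℝ) ≤ ∑ q, M p q := by
    have h1 := hH {p} Finset.univ
    simp only [hallSum, Finset.sum_singleton, Finset.card_univ, Fintype.card_fin,
      Finset.card_singleton, Nat.cast_one] at h1
    linarith
  refine le_antisymm ?_ hge
  set S : Finset (Fin r) := Finset.univ.filter (fun q => M p q ≠ 0) with hS
  have hSne : S.Nonempty := by
    rcases S.eq_empty_or_nonempty with he | hne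
    · exfalso
      have hz : ∀ q, M p q = 0 := by
        intro q
        by_contra hc
        have : q ∈ S := by simp [hS, hc]
        simp [he] at this
      have : ∑ q, M p q = 0 := Finset.sum_eq_zero fun q _ => hz q
      rw [this] at hge; linarith
    · exact hne
  obtain ⟨A, B, hpA, hSB, htAB⟩ := exists_tight_pair_row hM hH p S hSne
    (fun q hq => by
      rcases ht p q with h0 | h1
      · exact absurd h0 (by simpa [hS] using hq)
      · exact h1)
  have hsplit : hallSum M A B = hallSum M (A.erase p) B + ∑ q ∈ B, M p q := by
    unfold hallSum
    exact (Finset.sum_erase_add A _ hpA).symm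
  have hrow : ∑ q ∈ B, M p q = ∑ q, M p q := by
    refine Finset.sum_subset B.subset_univ fun q _ hq => ?_
    by_contra hne
    exact hq (hSB (by simp [hS, hne]))
  have hH2 := hH (A.erase p) B
  have hcard : (((A.erase p).card : ℝ)) = (A.card : ℝ) - 1 := by
    rw [Finset.card_erase_of_mem hpA,
      Nat.cast_sub (Finset.one_le_card.mpr ⟨p, hpA⟩), Nat.cast_one]
  unfold Tight at htAB
  rw [hsplit, hrow] at htAB
  rw [hcard] at hH2
  linarith

private def updEntry (M : Matrix (Fin r) (Fin r) ℝ) (p q : Fin r) (c : ℝ) :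
    Matrix (Fin r) (Fin r) ℝ :=
  Matrix.of fun a b => if a = p ∧ b = q then c else M a b

private lemma updEntry_apply (M : Matrix (Fin r) (Fin r) ℝ) (p q : Fin r) (c : ℝ) (a b : Fin r) :
    updEntry M p q c a b = if a = p ∧ b = q then c else M a b := rfl

private lemma hallSum_upd (M : Matrix (Fin r) (Fin r) ℝ) (p q : Fin r) (c : ℝ)
    (A B : Finset (Fin r)) :
    hallSum (updEntry M p q c) A B
      = hallSum M A B + (if p ∈ A ∧ q ∈ B then c - M p q else 0) := by
  classical
  have key : ∀ a b, updEntry M p q c a b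
      = M a b + (if a = p ∧ b = q then c - M p q else 0) := by
    intro a b
    rw [updEntry_apply]
    by_cases hab : a = p ∧ b = q
    · obtain ⟨rfl, rfl⟩ := hab; simp
    · simp [hab]
  unfold hallSum
  simp only [key, Finset.sum_add_distrib]
  congr 1
  have inner : ∀ a, (∑ b ∈ B, if a = p ∧ b = q then c - M p q else 0)
      = if a = p ∧ q ∈ B then c - M p q else 0 := by
    intro a
    by_cases ha : a = p
    · subst ha
      simp only [true_and]
      exact Finset.sum_ite_eq' B q fun _ => c - M a q
    · simp [ha]
  rw [Finset.sum_congr rfl fun a (_ : a ∈ A) => inner a]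
  by_cases hq : q ∈ B
  · simp only [hq, and_true]
    exact Finset.sum_ite_eq' A p fun _ => c - M p q
  · simp [hq]

private lemma exists_step {M : Matrix (Fin r) (Fin r) ℝ} (h0 : ∀ a b, 0 ≤ M a b)
    (hH : Hall M) (p q : Fin r) :
    ∃ M₁ : Matrix (Fin r) (Fin r) ℝ, (∀ a b, 0 ≤ M₁ a b) ∧ Hall M₁ ∧
      (∀ a b, M₁ a b ≤ M a b) ∧
      (∀ a b, ¬(a = p ∧ b = q) → M₁ a b = M a b) ∧
      (M₁ p q = 0 ∨ ∃ A B, p ∈ A ∧ q ∈ B ∧ Tight M₁ A B) := by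
  classical
  set s : Finset (Finset (Fin r) × Finset (Fin r)) :=
    Finset.univ.filter (fun AB => p ∈ AB.1 ∧ q ∈ AB.2) with hs_def
  have hs : s.Nonempty := ⟨(Finset.univ, Finset.univ), by simp [hs_def]⟩
  set f : Finset (Fin r) × Finset (Fin r) → ℝ :=
    fun AB => (((AB.1.card : ℝ) + AB.2.card - r) - hallSum M AB.1 AB.2) + M p q with hf_def
  set c : ℝ := max 0 (s.sup' hs f) with hc_def
  have hfle : ∀ AB ∈ s, f AB ≤ M p q := by
    intro AB _
    have := hH AB.1 AB.2
    simp only [hf_def]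
    linarith
  have hcle : c ≤ M p q := max_le (h0 p q) (Finset.sup'_le hs f hfle)
  have hc0 : 0 ≤ c := le_max_left _ _
  have hself : updEntry M p q c p q = c := by simp [updEntry_apply]
  refine ⟨updEntry M p q c, ?_, ?_, ?_, ?_, ?_⟩
  · intro a b
    rw [updEntry_apply]
    split
    · exact hc0
    · exact h0 a b
  · intro A B
    rw [hallSum_upd]
    by_cases hmem : p ∈ A ∧ q ∈ B
    · have hfc : f (A, B) ≤ c := by
        refine le_trans (Finset.le_sup' f ?_) (le_max_right _ _)
        simp [hs_def, hmem.1, hmem.2]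
      simp only [hf_def] at hfc
      rw [if_pos hmem]
      linarith
    · rw [if_neg hmem, add_zero]
      exact hH A B
  · intro a b
    rw [updEntry_apply]
    split
    · next hab => obtain ⟨rfl, rfl⟩ := hab; exact hcle
    · exact le_refl _
  · intro a b hab
    rw [updEntry_apply, if_neg hab]
  · rcases le_or_gt (s.sup' hs f) 0 with hle | hlt
    · left
      rw [hself, hc_def, max_eq_left hle]
    · right
      obtain ⟨AB, hABs, hAB⟩ := Finset.exists_mem_eq_sup' hs f
      have hABmem : p ∈ AB.1 ∧ q ∈ AB.2 := by simpa [hs_def] using hABs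
      refine ⟨AB.1, AB.2, hABmem.1, hABmem.2, ?_⟩
      have hcf : c = f AB := by rw [hc_def, max_eq_right hlt.le, hAB]
      unfold Tight
      rw [hallSum_upd, if_pos hABmem, hcf]
      simp only [hf_def]
      ring

private lemma exists_min_list (L : List (Fin r × Fin r)) :
    ∀ M : Matrix (Fin r) (Fin r) ℝ, (∀ a b, 0 ≤ M a b) → Hall M →
    ∃ M₁ : Matrix (Fin r) (Fin r) ℝ, (∀ a b, 0 ≤ M₁ a b) ∧ Hall M₁ ∧
      (∀ a b, M₁ a b ≤ M a b) ∧
      (∀ a b, (a, b) ∉ L → M₁ a b = M a b) ∧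
      (∀ ab : Fin r × Fin r, ab ∈ L →
        (M₁ ab.1 ab.2 = 0 ∨ ∃ A B, ab.1 ∈ A ∧ ab.2 ∈ B ∧ Tight M₁ A B)) := by
  classical
  induction L with
  | nil =>
    intro M h0 hH
    exact ⟨M, h0, hH, fun a b => le_refl _, fun a b _ => rfl, by simp⟩
  | cons pq L ih =>
    intro M h0 hH
    obtain ⟨M', h0', hH', hle', hunch', hzt'⟩ := exists_step h0 hH pq.1 pq.2
    obtain ⟨M₁, h0₁, hH₁, hle₁, hunch₁, hmem₁⟩ := ih M' h0' hH'
    refine ⟨M₁, h0₁, hH₁, fun a b => (hle₁ a b).trans (hle' a b), ?_, ?_⟩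
    · intro a b hab
      have hab1 : (a, b) ∉ L := fun hc => hab (List.mem_cons_of_mem _ hc)
      have hab2 : ¬(a = pq.1 ∧ b = pq.2) := by
        rintro ⟨rfl, rfl⟩
        exact hab List.mem_cons_self
      rw [hunch₁ a b hab1, hunch' a b hab2]
    · intro ab hab
      rcases List.mem_cons.mp hab with h | h
      · subst h
        by_cases hL : ab ∈ L
        · exact hmem₁ ab hL
        · rcases hzt' with h0pq | ⟨A, B, hpA, hqB, htt⟩
          · left
            rw [show ab = (ab.1, ab.2) from rfl] at hL
            rw [hunch₁ ab.1 ab.2 hL, h0pq]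
          · exact Or.inr ⟨A, B, hpA, hqB, tight_mono hle₁ hH₁ htt⟩
      · exact hmem₁ ab h

private lemma exists_DS_le (M : Matrix (Fin r) (Fin r) ℝ) (h0 : ∀ a b, 0 ≤ M a b)
    (hH : Hall M) :
    ∃ D : Matrix (Fin r) (Fin r) ℝ,
      (∀ a b, 0 ≤ D a b) ∧ (∀ a, ∑ b, D a b = 1) ∧ (∀ b, ∑ a, D a b = 1) ∧
      (∀ a b, D a b ≤ M a b) := by
  classical
  obtain ⟨M₁, h0₁, hH₁, hle₁, _, hzt⟩ :=
    exists_min_list (Finset.univ : Finset (Fin r × Fin r)).toList M h0 hH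
  have hzt' : ∀ a b, M₁ a b = 0 ∨ ∃ A B, a ∈ A ∧ b ∈ B ∧ Tight M₁ A B := by
    intro a b
    exact hzt (a, b) (by simp [Finset.mem_toList])
  exact ⟨M₁, h0₁, fun a => rowsum_eq_one h0₁ hH₁ hzt' a,
    fun b => colsum_eq_one h0₁ hH₁ hzt' b, hle₁⟩


/-- If V Hᵀ = I then the matrix with (j,i) entry (v_{ij}² + h_{ij}²)/2 is
superstochastic. -/
theorem superstochastic_of_inverse {r : ℕ} (V H : Matrix (Fin r) (Fin r) ℝ)
    (h : V * Hᵀ = 1) :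
    SuperStochastic (Matrix.of fun j i => (V i j ^ 2 + H i j ^ 2) / 2) := by
  classical
  set M : Matrix (Fin r) (Fin r) ℝ :=
    Matrix.of fun j i => (V i j ^ 2 + H i j ^ 2) / 2 with hM
  have h0 : ∀ a b, 0 ≤ M a b := by
    intro a b
    show (0 : ℝ) ≤ (V b a ^ 2 + H b a ^ 2) / 2
    positivity
  have hH : Hall M := by
    intro A B
    have h1 := hall_of_inverse V H h A B
    simpa [hallSum, hM, Matrix.of_apply] using h1
  obtain ⟨D, hD0, hDrow, hDcol, hle⟩ := exists_DS_le M h0 hH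
  refine ⟨D, M - D, ⟨hD0, hDrow, hDcol⟩, ?_, ?_⟩
  · intro i j
    have h2 := hle i j
    simp only [Matrix.sub_apply]
    linarith
  · show M = D + (M - D)
    abel
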